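/- arXiv:math/0212297 — 2 statements merged into one kernel-verified Lean document; each statement's English description precedes it below -/
import Mathlib

section
/- Let θ be an abelian group and α : θ → ℤ/2ℤ a surjective group homomorphism, and suppose there is no element u ∈ θ with 2u = 0 and α(u) = 1. Then there exists a group homomorphism f : ker α → ℤ/2ℤ that does not extend to θ; that is, there is no group homomorphism g : θ → ℤ/2ℤ with g(v) = f(v) for all v ∈ ker α. -/
/-- If θ has no element u with 2u = 0 and α(u) = 1, then there is a group
homomorphism f : ker α → ℤ/2ℤ which does not extend to θ. -/
theorem exists_nonextending_hom
    {θ : Type*} [AddCommGroup θ] (α : θ →+ ZMod 2)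
    (hα : Function.Surjective α)
    (hno : ¬ ∃ u : θ, 2 • u = 0 ∧ α u = 1) :
    ∃ f : α.ker →+ ZMod 2,
      ¬ ∃ g : θ →+ ZMod 2, ∀ v : α.ker, g (v : θ) = f v := by
  obtain ⟨t, ht⟩ := hα 1
  set K := α.ker
  have hxmem : (2 : ℕ) • t ∈ K := by
    show α (2 • t) = 0
    rw [map_nsmul, ht]
    decide
  set x : K := ⟨2 • t, hxmem⟩ with hx
  -- the subgroup 2K
  set h2 : K →+ K := (2 : ℕ) • AddMonoidHom.id K with hh2
  set H : AddSubgroup K := h2.range with hH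
  have hHmem : ∀ y : K, (2 : ℕ) • y ∈ H := fun y => ⟨y, rfl⟩
  letI : Module (ZMod 2) (K ⧸ H) := QuotientAddGroup.zmodModule hHmem
  have hxne : (QuotientAddGroup.mk x : K ⧸ H) ≠ 0 := by
    intro h
    rw [QuotientAddGroup.eq_zero_iff] at h
    obtain ⟨k, hk⟩ := h
    apply hno
    refine ⟨t - (k : θ), ?_, ?_⟩
    · have : (2 : ℕ) • (k : θ) = 2 • t := by
        have := congrArg (Subtype.val) hk
        simpa [hh2, hx] using this
      have h2' : (2 : ℕ) • (t - (k : θ)) = 0 := by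
        rw [smul_sub, this, sub_self]
      simpa using h2'
    · have hk0 : α (k : θ) = 0 := k.2
      simp [map_sub, ht, hk0]
  obtain ⟨φ, hφ⟩ : ∃ φ : Module.Dual (ZMod 2) (K ⧸ H),
      φ (QuotientAddGroup.mk x) ≠ 0 := by
    by_contra h
    push_neg at h
    exact hxne ((Module.forall_dual_apply_eq_zero_iff (ZMod 2) _).mp h)
  have hφ1 : φ (QuotientAddGroup.mk x) = 1 := by
    revert hφ; generalize φ (QuotientAddGroup.mk x) = a; revert a; decide
  refine ⟨φ.toAddMonoidHom.comp (QuotientAddGroup.mk' H), ?_⟩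
  rintro ⟨g, hg⟩
  have h1 : g ((x : θ)) = 1 := by
    rw [hg x]
    simpa using hφ1
  have h0 : g ((x : θ)) = 0 := by
    show g (2 • t) = 0
    rw [map_nsmul]
    exact (by decide : ∀ a : ZMod 2, 2 • a = 0) _
  rw [h0] at h1
  exact one_ne_zero h1.symm
end

section
/- Let θ be an abelian group and α : θ → ℤ/2ℤ a surjective group homomorphism. Then the short exact sequence 0 → ker α → θ → ℤ/2ℤ → 0 splits (i.e., there exists a group homomorphism s : ℤ/2ℤ → θ with α ∘ s = id) if and only if every group homomorphism f : ker α → ℤ/2ℤ extends to a group homomorphism g : θ → ℤ/2ℤ (meaning g(v) = f(v) for all v ∈ ker α). -/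
/-- The sequence 0 → ker α → θ → ℤ/2ℤ → 0 splits iff every group homomorphism
f : ker α → ℤ/2ℤ extends to θ. -/
theorem splits_iff_every_hom_extends
    {θ : Type*} [AddCommGroup θ] (α : θ →+ ZMod 2)
    (hα : Function.Surjective α) :
    (∃ s : ZMod 2 →+ θ, α.comp s = AddMonoidHom.id (ZMod 2)) ↔
      (∀ f : α.ker →+ ZMod 2, ∃ g : θ →+ ZMod 2, ∀ v : α.ker, g (v : θ) = f v) := by
  constructor
  · rintro ⟨s, hs⟩ f
    have hsα : ∀ y, α (s y) = y := fun y => DFunLike.congr_fun hs y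
    refine ⟨f.comp (AddMonoidHom.mk'
      (fun x => (⟨x - s (α x), by simp [AddMonoidHom.mem_ker, hsα]⟩ : α.ker))
      (fun a b => by ext; push_cast; simp only [map_add]; abel)), fun v => ?_⟩
    simp only [AddMonoidHom.comp_apply, AddMonoidHom.mk'_apply]
    congr 1
    ext
    have hv : α (v : θ) = 0 := v.2
    simp [hv]
  · intro hf
    obtain ⟨t, ht⟩ := hα 1
    have hk : (2 • t) ∈ α.ker := by
      simp [AddMonoidHom.mem_ker, ht]
      decide
    set k : α.ker := ⟨2 • t, hk⟩ with hkdef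
    by_cases hsplit : ∃ u : α.ker, 2 • u = k
    · obtain ⟨u, hu⟩ := hsplit
      have hcoe : 2 • (u : θ) = 2 • t := congrArg Subtype.val hu
      have h2 : ((2 : ℤ) •  (t - (u : θ))) = 0 := by
        have : (t - (u:θ)) + (t - (u:θ)) = 2 • t - 2 • (u:θ) := by
          simp [two_nsmul]; abel
        rw [two_zsmul, this, hcoe, sub_self]
      refine ⟨ZMod.lift 2 ⟨zmultiplesHom θ (t - u), by simpa using h2⟩, ?_⟩
      ext x
      obtain ⟨m, rfl⟩ := ZMod.intCast_surjective x
      simp only [AddMonoidHom.comp_apply, ZMod.lift_coe, AddMonoidHom.id_apply]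
      simp [zmultiplesHom_apply, map_zsmul, ht,
        AddMonoidHom.mem_ker.mp u.2]
    · exfalso
      -- build a hom f : ker α →+ ZMod 2 with f k = 1
      let two : α.ker →+ α.ker := 2 • AddMonoidHom.id _
      let D : AddSubgroup α.ker := two.range
      letI : Module (ZMod 2) (α.ker ⧸ D) :=
        QuotientAddGroup.zmodModule (n := 2) (fun x => ⟨x, rfl⟩)
      have hknz : (QuotientAddGroup.mk' D k : α.ker ⧸ D) ≠ 0 := by
        intro h
        rw [QuotientAddGroup.mk'_apply, QuotientAddGroup.eq_zero_iff] at h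
        obtain ⟨u, hu⟩ := h
        exact hsplit ⟨u, hu⟩
      obtain ⟨φ, hφ⟩ : ∃ φ : Module.Dual (ZMod 2) (α.ker ⧸ D),
          φ (QuotientAddGroup.mk' D k) ≠ 0 := by
        by_contra h
        push_neg at h
        exact hknz ((Module.forall_dual_apply_eq_zero_iff (ZMod 2) _).mp h)
      obtain ⟨g, hg⟩ := hf (φ.toAddMonoidHom.comp (QuotientAddGroup.mk' D))
      have h1 : g (k : θ) = 0 := by
        show g (2 • t) = 0
        rw [map_nsmul]
        exact (by decide : ∀ x : ZMod 2, 2 • x = 0) _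
      rw [hg k] at h1
      simp only [AddMonoidHom.comp_apply, LinearMap.toAddMonoidHom_coe] at h1
      exact hφ h1
end
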